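/- Let k ≥ 1, let μ be a measure on ℝ, and let F : ℝ^k → ℝ be a measurable skew-symmetric function, i.e. F(x_{σ(1)},…,x_{σ(k)}) = sgn(σ) F(x_1,…,x_k) for every permutation σ of {1,…,k}. Assume that for every permutation (a_1,…,a_k) of (0,1,…,k−1) the function x ↦ F(x) ∏_{i=1}^k x_i^{a_i} is integrable with respect to the product measure μ^{⊗k} on ℝ^k. Then ∫_{ℝ^k} F(x_1,…,x_k) · Δ_k(x) · ∏_{i=1}^k μ(dx_i) = k! ∫_{ℝ^k} F(x_1,…,x_k) · ∏_{i=1}^k x_i^{i−1} · μ(dx_i). -/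
import Mathlib

open MeasureTheory

noncomputable section

/-- The Vandermonde determinant `Δ_k(x) = ∏_{1 ≤ i < j ≤ k} (x_j - x_i)`. -/
def vdm {m : ℕ} (z : Fin m → ℝ) : ℝ :=
  ∏ i : Fin m, ∏ j ∈ Finset.Ioi i, (z j - z i)

/-- The coordinate-permutation map on `Fin k → ℝ` applied pointwise. -/
lemma piCongrLeft_eq_comp {k : ℕ} (σ : Equiv.Perm (Fin k)) (y : Fin k → ℝ) :
    (MeasurableEquiv.piCongrLeft (fun _ : Fin k => ℝ) σ) y = y ∘ σ.symm := by
  funext j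
  have h := MeasurableEquiv.piCongrLeft_apply_apply σ (β := fun _ : Fin k => ℝ) y (σ.symm j)
  rw [Equiv.apply_symm_apply] at h
  exact h

/-- Permutation invariance of a product measure with identical factors,
without any sigma-finiteness assumption. -/
lemma measurePreserving_perm {k : ℕ} (μ : Measure ℝ) (σ : Equiv.Perm (Fin k)) :
    MeasurePreserving (MeasurableEquiv.piCongrLeft (fun _ : Fin k => ℝ) σ)
      (Measure.pi fun _ : Fin k => μ) (Measure.pi fun _ : Fin k => μ) := by
  set P := MeasurableEquiv.piCongrLeft (fun _ : Fin k => ℝ) σ with hP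
  set m : OuterMeasure (Fin k → ℝ) :=
    OuterMeasure.pi (fun _ : Fin k => μ.toOuterMeasure) with hm
  -- outer-measure invariance
  have hOM : ∀ t : Set (Fin k → ℝ), m (⇑P '' t) = m t := by
    have hcomap := OuterMeasure.comap_boundedBy (f := ⇑P)
      (m := fun s : Set (Fin k → ℝ) => piPremeasure (fun _ : Fin k => μ.toOuterMeasure) s)
      (Or.inr P.surjective)
    have hpre : (fun s : Set (Fin k → ℝ) =>
        piPremeasure (fun _ : Fin k => μ.toOuterMeasure) (⇑P '' s))
        = fun s => piPremeasure (fun _ : Fin k => μ.toOuterMeasure) s := by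
      funext s
      simp only [piPremeasure]
      have himg : ∀ i : Fin k, Function.eval i '' (⇑P '' s)
          = Function.eval (σ.symm i) '' s := by
        intro i
        ext a
        constructor
        · rintro ⟨-, ⟨x, hx, rfl⟩, rfl⟩
          exact ⟨x, hx, by rw [piCongrLeft_eq_comp]; rfl⟩
        · rintro ⟨x, hx, rfl⟩
          exact ⟨P x, ⟨x, hx, rfl⟩, by rw [piCongrLeft_eq_comp]; rfl⟩
      simp_rw [himg]
      exact Equiv.prod_comp σ.symm fun j => μ.toOuterMeasure (Function.eval j '' s)
    intro t
    have := congrArg (fun (ν : OuterMeasure (Fin k → ℝ)) => ν t) hcomap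
    simp only [OuterMeasure.comap_apply] at this
    rw [hpre] at this
    exact this
  refine ⟨P.measurable, ?_⟩
  ext s hs
  rw [Measure.map_apply P.measurable hs, Measure.pi_def, toMeasure_apply _ _ hs,
    toMeasure_apply _ _ (P.measurable hs)]
  have : ⇑P '' (⇑P ⁻¹' s) = s := Set.image_preimage_eq s P.surjective
  calc m (⇑P ⁻¹' s) = m (⇑P '' (⇑P ⁻¹' s)) := (hOM _).symm
    _ = m s := by rw [this]

/-- For a skew-symmetric integrable `F : ℝ^k → ℝ`,
`∫ F(x) Δ_k(x) ∏ μ(dx_i) = k! ∫ F(x) ∏ x_i^{i-1} μ(dx_i)`. -/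
theorem statement3 {k : ℕ} (hk : 1 ≤ k) (μ : Measure ℝ)
    (F : (Fin k → ℝ) → ℝ) (hFmeas : Measurable F)
    (hskew : ∀ (σ : Equiv.Perm (Fin k)) (x : Fin k → ℝ),
      F (x ∘ σ) = (Equiv.Perm.sign σ : ℤ) * F x)
    (hint : ∀ σ : Equiv.Perm (Fin k),
      Integrable (fun x : Fin k → ℝ => F x * ∏ i, x i ^ ((σ i : ℕ)))
        (Measure.pi fun _ => μ)) :
    ∫ x, F x * vdm x ∂(Measure.pi fun _ : Fin k => μ)
      = (k.factorial : ℝ) *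
        ∫ x, F x * ∏ i, x i ^ ((i : ℕ)) ∂(Measure.pi fun _ : Fin k => μ) := by
  set π := (Measure.pi fun _ : Fin k => μ) with hπ
  -- Vandermonde expansion
  have hv : ∀ x : Fin k → ℝ,
      vdm x = ∑ σ : Equiv.Perm (Fin k), (Equiv.Perm.sign σ : ℤ) * ∏ i, x (σ i) ^ (i : ℕ) := by
    intro x
    have hdet := Matrix.det_vandermonde x
    rw [Matrix.det_apply] at hdet
    rw [vdm, ← hdet]
    refine Finset.sum_congr rfl fun σ _ => ?_
    simp [Matrix.vandermonde, Units.smul_def, zsmul_eq_mul]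
  -- rewrite product composed with σ
  have hprod : ∀ (σ : Equiv.Perm (Fin k)) (x : Fin k → ℝ),
      (∏ i, x (σ i) ^ (i : ℕ)) = ∏ j, x j ^ ((σ.symm j : ℕ)) := by
    intro σ x
    rw [← Equiv.prod_comp σ (fun j => x j ^ ((σ.symm j : ℕ)))]
    simp
  have hintegrable : ∀ σ : Equiv.Perm (Fin k),
      Integrable (fun x : Fin k → ℝ => F x * ∏ i, x (σ i) ^ (i : ℕ)) π := by
    intro σ
    have := hint σ.symm
    simpa [hprod σ] using this
  -- change of variables for each permutation
  have hmp : ∀ σ : Equiv.Perm (Fin k),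
      ∫ x, F x * ∏ i, x (σ i) ^ (i : ℕ) ∂π
        = ((Equiv.Perm.sign σ : ℤ) : ℝ) * ∫ x, F x * ∏ i, x i ^ (i : ℕ) ∂π := by
    intro σ
    have hT := measurePreserving_perm μ σ
    have key := hT.integral_comp'
      (g := fun x : Fin k → ℝ => F x * ∏ i, x (σ i) ^ (i : ℕ))
    rw [← key]
    have heq : ∀ y : Fin k → ℝ,
        F ((MeasurableEquiv.piCongrLeft (fun _ : Fin k => ℝ) σ) y)
          * ∏ i, ((MeasurableEquiv.piCongrLeft (fun _ : Fin k => ℝ) σ) y) (σ i) ^ (i : ℕ)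
        = ((Equiv.Perm.sign σ : ℤ) : ℝ) * (F y * ∏ i, y i ^ (i : ℕ)) := by
      intro y
      rw [piCongrLeft_eq_comp]
      have h1 : F (y ∘ σ.symm) = ((Equiv.Perm.sign σ.symm : ℤ) : ℝ) * F y := by
        exact_mod_cast hskew σ.symm y
      have h2 : ∀ i : Fin k, (y ∘ σ.symm) (σ i) = y i := by intro i; simp
      simp only [h2, h1, Equiv.Perm.sign_symm]
      ring
    simp_rw [heq]
    rw [integral_const_mul]
  calc ∫ x, F x * vdm x ∂π
      = ∫ x, ∑ σ : Equiv.Perm (Fin k),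
          ((Equiv.Perm.sign σ : ℤ) : ℝ) * (F x * ∏ i, x (σ i) ^ (i : ℕ)) ∂π := by
        congr 1; funext x; rw [hv x, Finset.mul_sum]
        refine Finset.sum_congr rfl fun σ _ => by push_cast; ring
    _ = ∑ σ : Equiv.Perm (Fin k),
          ∫ x, ((Equiv.Perm.sign σ : ℤ) : ℝ) * (F x * ∏ i, x (σ i) ^ (i : ℕ)) ∂π :=
        integral_finset_sum _ fun σ _ => (hintegrable σ).const_mul _
    _ = ∑ σ : Equiv.Perm (Fin k),
          ((Equiv.Perm.sign σ : ℤ) : ℝ) * (((Equiv.Perm.sign σ : ℤ) : ℝ) *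
            ∫ x, F x * ∏ i, x i ^ (i : ℕ) ∂π) := by
        refine Finset.sum_congr rfl fun σ _ => ?_
        rw [integral_const_mul, hmp σ]
    _ = (k.factorial : ℝ) * ∫ x, F x * ∏ i, x i ^ ((i : ℕ)) ∂π := by
        have hs : ∀ σ : Equiv.Perm (Fin k),
            ((Equiv.Perm.sign σ : ℤ) : ℝ) * ((Equiv.Perm.sign σ : ℤ) : ℝ) = 1 := by
          intro σ; rcases Int.units_eq_one_or (Equiv.Perm.sign σ) with h | h <;> simp [h]
        simp_rw [← mul_assoc, hs, one_mul, Finset.sum_const, Finset.card_univ,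
          Fintype.card_perm, Fintype.card_fin, nsmul_eq_mul]

end
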